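/- Let C be a symmetric matrix supported on a subset S of indices (all entries outside the S×S block are zero). Suppose I - δG and I - δ(G+C) are invertible, and let x̂* = (I - δ(G+C))^{-1}θ. Then x̂* = (I - δG)^{-1}(θ + Δθ) where Δθ is the vector that is zero outside S and equals δ C_{SS} x̂*_S on S. That is, a structural intervention C is outcome-equivalent to the characteristic intervention Δθ supported on S. -/
import Mathlib


open Matrix

theorem structural_equiv_characteristic {n : ℕ} (G C : Matrix (Fin n) (Fin n) ℝ) (δ : ℝ)
    (θ : Fin n → ℝ) (S : Set (Fin n)) (hsymG : G.IsSymm) (hsymC : C.IsSymm)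
    (hsupp : ∀ i j, (i ∉ S ∨ j ∉ S) → C i j = 0)
    (h1 : IsUnit (1 - δ • G)) (h2 : IsUnit (1 - δ • (G + C))) :
    ((1 - δ • (G + C))⁻¹ *ᵥ θ)
      = (1 - δ • G)⁻¹ *ᵥ (θ + δ • (C *ᵥ ((1 - δ • (G + C))⁻¹ *ᵥ θ))) ∧
    ∀ i ∉ S, (δ • (C *ᵥ ((1 - δ • (G + C))⁻¹ *ᵥ θ))) i = 0 := by
  set x := (1 - δ • (G + C))⁻¹ *ᵥ θ with hx
  have key : (1 - δ • (G + C)) *ᵥ x = θ := by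
    rw [hx, mulVec_mulVec, mul_nonsing_inv _ ((isUnit_iff_isUnit_det _).mp h2), one_mulVec]
  constructor
  · have h3 : (1 - δ • G) *ᵥ x = θ + δ • (C *ᵥ x) := by
      have : (1 - δ • G) *ᵥ x = (1 - δ • (G + C)) *ᵥ x + (δ • C) *ᵥ x := by
        rw [← add_mulVec]
        congr 1
        rw [smul_add]; abel
      rw [this, key, smul_mulVec]
    rw [← h3, mulVec_mulVec, nonsing_inv_mul _ ((isUnit_iff_isUnit_det _).mp h1), one_mulVec]
  · intro i hi
    simp only [Pi.smul_apply, mulVec, dotProduct]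
    have : ∀ j, C i j * x j = 0 := fun j => by rw [hsupp i j (Or.inl hi), zero_mul]
    simp [this]
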